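/- Let a₀ > 0, and for j = 1, …, n let u_j ≥ 0, ε_j ≥ 0, and 0 ≤ x_j ≤ (a₀ + u_j)ε_j, and let ε_rem ≥ 0. Set a_j := a₀ + u_j, A := a₀ + Σ_j u_j, E := ε_rem + Σ_j ε_j, X := Σ_j x_j, and assume X ≤ A·E. Then Σ_j Φ(a_j, ε_j, x_j) ≥ Φ(A, E, X). -/

import Mathlib

noncomputable section

/-- The two-level entropy functional
`Φ(a,ε,x) = λ₊ log λ₊ + λ₋ log λ₋ − a log a − ε log ε`, where
`λ± = (a + ε ± √((a−ε)² + 4x))/2` (with `0 log 0 = 0` via `Real.log 0 = 0`). -/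
def Phi (a ε x : ℝ) : ℝ :=
  ((a + ε + Real.sqrt ((a - ε) ^ 2 + 4 * x)) / 2) *
      Real.log ((a + ε + Real.sqrt ((a - ε) ^ 2 + 4 * x)) / 2) +
    ((a + ε - Real.sqrt ((a - ε) ^ 2 + 4 * x)) / 2) *
      Real.log ((a + ε - Real.sqrt ((a - ε) ^ 2 + 4 * x)) / 2) -
    a * Real.log a - ε * Real.log ε
/-- Integrand of the integral representation of `Phi`. -/
def psi (a ε x t : ℝ) : ℝ :=
  t * (a + ε + 2*t) * x / (((a+t) * (ε+t) - x) * ((a+t) * (ε+t)))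

lemma denom_pos {a ε x t : ℝ} (ha : 0 ≤ a) (hε : 0 ≤ ε) (hx : x ≤ a * ε)
    (ht : 0 < t) : 0 < (a+t) * (ε+t) - x := by nlinarith

lemma psi_nonneg {a ε x t : ℝ} (ha : 0 ≤ a) (hε : 0 ≤ ε) (hx0 : 0 ≤ x)
    (hx : x ≤ a * ε) (ht : 0 < t) : 0 ≤ psi a ε x t := by
  have h1 := denom_pos ha hε hx ht
  have h2 : 0 < (a+t) * (ε+t) := by nlinarith
  unfold psi
  positivity

lemma psi_zero_x {a ε t : ℝ} : psi a ε 0 t = 0 := by simp [psi]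

/-- `psi` is nonincreasing in `a` (on the feasible domain). -/
lemma psi_anti_a {a a' ε x t : ℝ} (ha : 0 ≤ a) (haa : a ≤ a') (hε : 0 ≤ ε)
    (hx0 : 0 ≤ x) (hx : x ≤ a * ε) (ht : 0 < t) :
    psi a' ε x t ≤ psi a ε x t := by
  have ha' : 0 ≤ a' := le_trans ha haa
  have hx' : x ≤ a' * ε := le_trans hx (by nlinarith)
  have d1 : 0 < (a+t) * (ε+t) - x := denom_pos ha hε hx ht
  have d1' : 0 < (a'+t) * (ε+t) - x := denom_pos ha' hε hx' ht
  have p1 : 0 < (a+t) * (ε+t) := by nlinarith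
  have p1' : 0 < (a'+t) * (ε+t) := by nlinarith
  unfold psi
  rw [div_le_div_iff₀ (by positivity) (by positivity)]
  have key : t * (a + ε + 2*t) * x * (((a'+t) * (ε+t) - x) * ((a'+t) * (ε+t)))
      - t * (a' + ε + 2*t) * x * (((a+t) * (ε+t) - x) * ((a+t) * (ε+t)))
      = t * x * (ε+t)^2 * (a' - a) * ((a+t)*(a'+t) + (ε+t)*((a+t)+(a'+t)) - x) := by
    ring
  nlinarith [mul_nonneg (mul_nonneg (mul_nonneg (mul_nonneg ht.le hx0) (sq_nonneg (ε+t)))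
    (sub_nonneg.2 haa)) (show (0:ℝ) ≤ (a+t)*(a'+t) + (ε+t)*((a+t)+(a'+t)) - x by nlinarith)]

/-- Same-`a` superadditivity of `psi`. -/
lemma psi_superadd {a ε₁ ε₂ x₁ x₂ t : ℝ} (ha : 0 ≤ a)
    (hε₁ : 0 ≤ ε₁) (hε₂ : 0 ≤ ε₂) (hx₁0 : 0 ≤ x₁) (hx₂0 : 0 ≤ x₂)
    (hx₁ : x₁ ≤ a * ε₁) (hx₂ : x₂ ≤ a * ε₂) (ht : 0 < t) :
    psi a (ε₁ + ε₂) (x₁ + x₂) t ≤ psi a ε₁ x₁ t + psi a ε₂ x₂ t := by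
  set α := a + t with hα
  have hα0 : 0 < α := by positivity
  have d1 : 0 < α * (ε₁+t) - x₁ := denom_pos ha hε₁ hx₁ ht
  have d2 : 0 < α * (ε₂+t) - x₂ := denom_pos ha hε₂ hx₂ ht
  have dm : 0 < α * (ε₁+ε₂+t) - (x₁+x₂) :=
    denom_pos ha (by linarith) (by nlinarith) ht
  -- key claim: X/D ≤ x₁/d₁ + x₂/d₂
  have claim : (x₁+x₂) / (α * (ε₁+ε₂+t) - (x₁+x₂))
      ≤ x₁ / (α * (ε₁+t) - x₁) + x₂ / (α * (ε₂+t) - x₂) := by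
    rw [div_add_div _ _ (ne_of_gt d1) (ne_of_gt d2), div_le_div_iff₀ dm (by positivity)]
    have e1 : α * (ε₁+t) - x₁ - α * t ≥ t * ε₁ := by
      have : α * ε₁ - x₁ ≥ t * ε₁ := by nlinarith
      nlinarith [this]
    have e2 : α * (ε₂+t) - x₂ - α * t ≥ t * ε₂ := by nlinarith
    nlinarith [mul_nonneg (mul_nonneg hx₁0 d2.le) (by nlinarith : (0:ℝ) ≤ α*(ε₂+t) - x₂ - α*t),
      mul_nonneg (mul_nonneg hx₂0 d1.le) (by nlinarith : (0:ℝ) ≤ α*(ε₁+t) - x₁ - α*t)]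
  -- rewrite psi as product
  have form : ∀ ε x : ℝ, psi a ε x t
      = (t * (α + (ε+t)) / (α * (ε+t))) * (x / (α * (ε+t) - x)) := by
    intro ε x
    unfold psi
    rw [← hα]
    rw [div_mul_div_comm]
    ring_nf
    rw [hα]; ring

  rw [form, form, form]
  have hc : ∀ ε : ℝ, 0 ≤ ε → 0 ≤ t * (α + (ε+t)) / (α * (ε+t)) := by
    intro ε hε; positivity
  have hmono : ∀ ε δ : ℝ, 0 ≤ ε → 0 ≤ δ →
      t * (α + (ε+δ+t)) / (α * (ε+δ+t)) ≤ t * (α + (ε+t)) / (α * (ε+t)) := by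
    intro ε δ hε hδ
    rw [div_le_div_iff₀ (by positivity) (by positivity)]
    nlinarith [mul_nonneg (mul_nonneg ht.le hα0.le) (mul_nonneg hα0.le hδ)]
  have h1 : t * (α + (ε₁+ε₂+t)) / (α * (ε₁+ε₂+t)) * ((x₁+x₂) / (α * (ε₁+ε₂+t) - (x₁+x₂)))
      ≤ t * (α + (ε₁+ε₂+t)) / (α * (ε₁+ε₂+t)) * (x₁ / (α * (ε₁+t) - x₁) + x₂ / (α * (ε₂+t) - x₂)) :=
    mul_le_mul_of_nonneg_left claim (hc _ (by linarith))
  have h2 : t * (α + (ε₁+ε₂+t)) / (α * (ε₁+ε₂+t)) * (x₁ / (α * (ε₁+t) - x₁))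
      ≤ t * (α + (ε₁+t)) / (α * (ε₁+t)) * (x₁ / (α * (ε₁+t) - x₁)) := by
    apply mul_le_mul_of_nonneg_right _ (by positivity)
    have := hmono ε₁ ε₂ hε₁ hε₂; linarith [this]
  have h3 : t * (α + (ε₁+ε₂+t)) / (α * (ε₁+ε₂+t)) * (x₂ / (α * (ε₂+t) - x₂))
      ≤ t * (α + (ε₂+t)) / (α * (ε₂+t)) * (x₂ / (α * (ε₂+t) - x₂)) := by
    apply mul_le_mul_of_nonneg_right _ (by positivity)
    have := hmono ε₂ ε₁ hε₂ hε₁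
    have heq : ε₂ + ε₁ + t = ε₁ + ε₂ + t := by ring
    rw [heq] at this; linarith
  calc t * (α + (ε₁+ε₂+t)) / (α * (ε₁+ε₂+t)) * ((x₁+x₂) / (α * (ε₁+ε₂+t) - (x₁+x₂)))
      ≤ _ := h1
    _ = t * (α + (ε₁+ε₂+t)) / (α * (ε₁+ε₂+t)) * (x₁ / (α * (ε₁+t) - x₁))
        + t * (α + (ε₁+ε₂+t)) / (α * (ε₁+ε₂+t)) * (x₂ / (α * (ε₂+t) - x₂)) := by ring
    _ ≤ _ := add_le_add h2 h3


/-- `psi` is nonincreasing in `ε`. -/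
lemma psi_anti_e {a ε δ x t : ℝ} (ha : 0 ≤ a) (hε : 0 ≤ ε) (hδ : 0 ≤ δ)
    (hx0 : 0 ≤ x) (hx : x ≤ a * ε) (ht : 0 < t) :
    psi a (ε + δ) x t ≤ psi a ε x t := by
  have := psi_superadd ha hε hδ hx0 (le_refl 0) hx
    (by positivity) ht
  simpa [psi_zero_x] using this

/-- Pointwise `psi`-merging over a finset. -/
lemma psi_merge_finset {n : ℕ} (a₀ : ℝ) (ha₀ : 0 < a₀) (u ε x : Fin n → ℝ)
    (hu : ∀ j, 0 ≤ u j) (hε : ∀ j, 0 ≤ ε j)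
    (hx : ∀ j, 0 ≤ x j) (hxu : ∀ j, x j ≤ (a₀ + u j) * ε j)
    {t : ℝ} (ht : 0 < t) (s : Finset (Fin n)) :
    psi (a₀ + ∑ j ∈ s, u j) (∑ j ∈ s, ε j) (∑ j ∈ s, x j) t
      ≤ ∑ j ∈ s, psi (a₀ + u j) (ε j) (x j) t := by
  induction s using Finset.cons_induction with
  | empty => simp [psi_zero_x]
  | cons i s his ih =>
    rw [Finset.sum_cons, Finset.sum_cons, Finset.sum_cons]
    have hsu : 0 ≤ ∑ j ∈ s, u j := Finset.sum_nonneg fun j _ => hu j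
    have hsε : 0 ≤ ∑ j ∈ s, ε j := Finset.sum_nonneg fun j _ => hε j
    have hsx : 0 ≤ ∑ j ∈ s, x j := Finset.sum_nonneg fun j _ => hx j
    have hsxe : ∑ j ∈ s, x j ≤ (a₀ + ∑ j ∈ s, u j) * ∑ j ∈ s, ε j := by
      calc ∑ j ∈ s, x j ≤ ∑ j ∈ s, (a₀ + ∑ k ∈ s, u k) * ε j := by
            apply Finset.sum_le_sum
            intro j hj
            refine le_trans (hxu j) ?_
            have : u j ≤ ∑ k ∈ s, u k := Finset.single_le_sum (fun k _ => hu k) hj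
            nlinarith [hε j]
        _ = (a₀ + ∑ j ∈ s, u j) * ∑ j ∈ s, ε j := by rw [← Finset.mul_sum]
    -- A' := a₀ + u i + Σ u
    set A' : ℝ := a₀ + (u i + ∑ j ∈ s, u j) with hA'
    have hA'i : a₀ + u i ≤ A' := by simp [hA']; linarith
    have hA's : a₀ + ∑ j ∈ s, u j ≤ A' := by simp [hA']; linarith [hu i]
    have hxiA : x i ≤ A' * ε i := le_trans (hxu i) (by nlinarith [hε i, hu i, hsu])
    have hsxA : ∑ j ∈ s, x j ≤ A' * ∑ j ∈ s, ε j := le_trans hsxe (by nlinarith [hu i])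
    have hA'0 : 0 ≤ A' := by rw [hA']; linarith [hu i, hsu, ha₀.le]
    calc psi A' (ε i + ∑ j ∈ s, ε j) (x i + ∑ j ∈ s, x j) t
        ≤ psi A' (ε i) (x i) t + psi A' (∑ j ∈ s, ε j) (∑ j ∈ s, x j) t :=
          psi_superadd hA'0 (hε i) hsε (hx i) hsx hxiA hsxA ht
      _ ≤ psi (a₀ + u i) (ε i) (x i) t
            + psi (a₀ + ∑ j ∈ s, u j) (∑ j ∈ s, ε j) (∑ j ∈ s, x j) t :=
          add_le_add (psi_anti_a (by linarith [hu i, ha₀.le]) hA'i (hε i) (hx i) (hxu i) ht)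
            (psi_anti_a (by linarith [hsu, ha₀.le]) hA's hsε hsx hsxe ht)
      _ ≤ _ := by rw [Finset.sum_cons]; exact add_le_add (le_refl _) ih


lemma Phi_zero_x {a ε : ℝ} (ha : 0 ≤ a) (hε : 0 ≤ ε) : Phi a ε 0 = 0 := by
  unfold Phi
  rw [show (a-ε)^2 + 4*0 = (a-ε)^2 by ring, Real.sqrt_sq_eq_abs]
  rcases le_total ε a with h | h
  · rw [abs_of_nonneg (by linarith)]
    rw [show (a + ε + (a - ε))/2 = a by ring, show (a + ε - (a - ε))/2 = ε by ring]
    ring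
  · rw [abs_of_nonpos (by linarith)]
    rw [show (a + ε + -(a - ε))/2 = ε by ring, show (a + ε - -(a - ε))/2 = a by ring]
    ring

open Filter in
lemma tendsto_term_atTop {c : ℝ} (hc : 0 ≤ c) :
    Tendsto (fun τ : ℝ => c * Real.log ((c+τ)/τ)) atTop (nhds 0) := by
  have h1 : Tendsto (fun τ : ℝ => c/τ + 1) atTop (nhds 1) := by
    have := (tendsto_const_nhds (x := c)).div_atTop (tendsto_id (α := ℝ))
    simpa using this.add (tendsto_const_nhds (x := (1:ℝ)))
  have h2 : Tendsto (fun τ : ℝ => (c+τ)/τ) atTop (nhds 1) := by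
    apply h1.congr'
    filter_upwards [eventually_gt_atTop (0:ℝ)] with τ hτ
    field_simp
  have h3 : Tendsto (fun τ : ℝ => Real.log ((c+τ)/τ)) atTop (nhds 0) := by
    have := (Real.continuousAt_log one_ne_zero).tendsto.comp h2
    simpa [Function.comp_def] using this
  simpa using h3.const_mul c

lemma contWithin_term {c : ℝ} (hc : 0 ≤ c) :
    ContinuousWithinAt (fun τ : ℝ => c * Real.log (c+τ)) (Set.Ici 0) 0 := by
  rcases eq_or_lt_of_le hc with h | h
  · have : (fun τ : ℝ => c * Real.log (c+τ)) = fun _ => 0 := by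
      funext τ; rw [← h]; ring
    rw [this]; exact continuousWithinAt_const
  · apply ContinuousAt.continuousWithinAt
    have : ContinuousAt (fun τ : ℝ => Real.log (c+τ)) 0 :=
      ContinuousAt.log (by fun_prop) (by simpa using h.ne')
    exact this.const_mul c

lemma hasDerivAt_term {c : ℝ} {τ : ℝ} (hcτ : 0 < c + τ) :
    HasDerivAt (fun τ : ℝ => c * Real.log (c+τ)) (c * (1/(c+τ))) τ := by
  have h1 : HasDerivAt (fun τ : ℝ => c + τ) 1 τ := (hasDerivAt_id τ).const_add c
  have h2 := h1.log hcτ.ne'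
  simpa using h2.const_mul c

set_option maxHeartbeats 2000000 in
lemma Phi_rep {a ε x : ℝ} (ha : 0 < a) (hε : 0 ≤ ε) (hx0 : 0 ≤ x)
    (hx : x ≤ a * ε) : Phi a ε x = (∫ t in Set.Ioi (0:ℝ), psi a ε x t)
      ∧ MeasureTheory.IntegrableOn (psi a ε x) (Set.Ioi (0:ℝ)) := by
  rcases eq_or_lt_of_le hx0 with hx0' | hx0'
  · constructor
    · rw [← hx0', Phi_zero_x ha.le hε]
      simp [psi_zero_x]
    · rw [← hx0']
      have : psi a ε 0 = fun _ => (0:ℝ) := by funext t; exact psi_zero_x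
      rw [this]
      exact MeasureTheory.integrableOn_zero
  · have hε' : 0 < ε := by nlinarith
    set s := Real.sqrt ((a-ε)^2 + 4*x) with hs
    have hs0 : 0 ≤ s := Real.sqrt_nonneg _
    have hs2 : s^2 = (a-ε)^2 + 4*x := Real.sq_sqrt (by positivity)
    set p := (a + ε + s)/2 with hp
    set m := (a + ε - s)/2 with hm
    have hpm : p + m = a + ε := by rw [hp, hm]; ring
    have hpm2 : p * m = a*ε - x := by
      rw [hp, hm]
      have : ((a+ε+s)/2) * ((a+ε-s)/2) = ((a+ε)^2 - s^2)/4 := by ring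
      rw [this, hs2]; ring
    have hsle : s ≤ a + ε := by
      have h1 : (a-ε)^2 + 4*x ≤ (a+ε)^2 := by nlinarith
      calc s ≤ Real.sqrt ((a+ε)^2) := Real.sqrt_le_sqrt h1
        _ = a + ε := Real.sqrt_sq (by positivity)
    have hp0 : 0 < p := by rw [hp]; positivity
    have hm0 : 0 ≤ m := by rw [hm]; linarith
    clear_value s p m
    set F : ℝ → ℝ := fun τ => a * Real.log (a+τ) + ε * Real.log (ε+τ)
      - p * Real.log (p+τ) - m * Real.log (m+τ) with hF
    have hεq : ε = p + m - a := by linarith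
    have hxq : x = a*ε - p*m := by linarith
    -- continuity at 0 within Ici 0
    have hcont : ContinuousWithinAt F (Set.Ici 0) 0 := by
      exact (((contWithin_term ha.le).add (contWithin_term hε'.le)).sub
        (contWithin_term hp0.le)).sub (contWithin_term hm0)
    -- derivative on Ioi 0
    have hderiv : ∀ τ ∈ Set.Ioi (0:ℝ), HasDerivAt F (psi a ε x τ) τ := by
      intro τ hτ
      rw [Set.mem_Ioi] at hτ
      have h1 := hasDerivAt_term (show 0 < a + τ by linarith)
      have h2 := hasDerivAt_term (show 0 < ε + τ by linarith)
      have h3 := hasDerivAt_term (show 0 < p + τ by linarith)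
      have h4 := hasDerivAt_term (show 0 < m + τ by linarith)
      have hD := ((h1.add h2).sub h3).sub h4
      refine hD.congr_deriv ?_; symm
      have hne1 : a + τ ≠ 0 := by positivity
      have hne2 : ε + τ ≠ 0 := by positivity
      have hne3 : p + τ ≠ 0 := by positivity
      have hne4 : m + τ ≠ 0 := by
        have : 0 < m + τ := by linarith
        exact this.ne'
      have hprod : ((a+τ)*(ε+τ) - x) * ((a+τ)*(ε+τ))
          = (((a+τ)*(ε+τ))*(p+τ))*(m+τ) := by
        have h : (a+τ)*(ε+τ) - x = (p+τ)*(m+τ) := by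
          linear_combination (-1 : ℝ)*hpm2 - τ*hpm
        rw [h]; ring
      unfold psi
      rw [hprod, mul_one_div, mul_one_div, mul_one_div, mul_one_div,
        div_add_div _ _ hne1 hne2, div_sub_div _ _ (mul_ne_zero hne1 hne2) hne3,
        div_sub_div _ _ (mul_ne_zero (mul_ne_zero hne1 hne2) hne3) hne4,
        div_eq_div_iff (by positivity) (by positivity)]
      linear_combination ((τ^3 - a*ε*τ)*hpm + (τ*(a+ε+2*τ))*hpm2)
        * (((a+τ)*(ε+τ))*((p+τ)*(m+τ)))
    -- nonnegativity of the integrand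
    have hnn : ∀ τ ∈ Set.Ioi (0:ℝ), 0 ≤ psi a ε x τ := fun τ hτ =>
      psi_nonneg ha.le hε hx0 hx (Set.mem_Ioi.1 hτ)
    -- limit at infinity
    have htend : Filter.Tendsto F Filter.atTop (nhds 0) := by
      have hG : ∀ᶠ τ in Filter.atTop, (fun τ => a * Real.log ((a+τ)/τ)
          + ε * Real.log ((ε+τ)/τ) - p * Real.log ((p+τ)/τ)
          - m * Real.log ((m+τ)/τ)) τ = F τ := by
        filter_upwards [Filter.eventually_gt_atTop (0:ℝ)] with τ hτ
        rw [hF]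
        rw [Real.log_div (ne_of_gt (by linarith)) hτ.ne',
          Real.log_div (ne_of_gt (by linarith)) hτ.ne',
          Real.log_div (ne_of_gt (by linarith)) hτ.ne',
          Real.log_div (ne_of_gt (by linarith)) hτ.ne']
        linear_combination Real.log τ * hpm
      have := (((tendsto_term_atTop ha.le).add (tendsto_term_atTop hε'.le)).sub
        (tendsto_term_atTop hp0.le)).sub (tendsto_term_atTop hm0)
      simp only [add_zero, sub_zero, zero_add, zero_sub, sub_self] at this
      refine Filter.Tendsto.congr' hG ?_
      convert this using 2 <;> ring
    have hint : MeasureTheory.IntegrableOn (psi a ε x) (Set.Ioi 0) :=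
      MeasureTheory.integrableOn_Ioi_deriv_of_nonneg hcont hderiv hnn htend
    have hkey := MeasureTheory.integral_Ioi_of_hasDerivAt_of_tendsto hcont hderiv hint htend
    refine ⟨?_, hint⟩
    rw [hkey]
    have hF0 : F 0 = a * Real.log a + ε * Real.log ε - p * Real.log p - m * Real.log m := by
      rw [hF]; simp
    rw [hF0]
    unfold Phi
    rw [← hs, ← hp, ← hm]
    ring


open MeasureTheory

/-- Floor-aware merging: with `a_j = a₀ + u_j`, `A = a₀ + Σ u_j`,
`E = ε_rem + Σ ε_j`, `X = Σ x_j ≤ A·E`, one has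
`Σ_j Φ(a_j, ε_j, x_j) ≥ Φ(A, E, X)`. -/
theorem Phi_merging (n : ℕ) (a₀ : ℝ) (ha₀ : 0 < a₀)
    (u ε x : Fin n → ℝ) (εrem : ℝ)
    (hu : ∀ j, 0 ≤ u j) (hε : ∀ j, 0 ≤ ε j) (hεrem : 0 ≤ εrem)
    (hx : ∀ j, 0 ≤ x j) (hxu : ∀ j, x j ≤ (a₀ + u j) * ε j)
    (hX : ∑ j, x j ≤ (a₀ + ∑ j, u j) * (εrem + ∑ j, ε j)) :
    ∑ j, Phi (a₀ + u j) (ε j) (x j) ≥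
      Phi (a₀ + ∑ j, u j) (εrem + ∑ j, ε j) (∑ j, x j) := by
  have hsu : 0 ≤ ∑ j, u j := Finset.sum_nonneg fun j _ => hu j
  have hsε : 0 ≤ ∑ j, ε j := Finset.sum_nonneg fun j _ => hε j
  have hsx : 0 ≤ ∑ j, x j := Finset.sum_nonneg fun j _ => hx j
  have hA : 0 < a₀ + ∑ j, u j := by linarith
  have hE : 0 ≤ εrem + ∑ j, ε j := by linarith
  have hXe : ∑ j, x j ≤ (a₀ + ∑ j, u j) * ∑ j, ε j := by
    calc ∑ j, x j ≤ ∑ j, (a₀ + ∑ k, u k) * ε j := by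
          apply Finset.sum_le_sum
          intro j hj
          refine le_trans (hxu j) ?_
          have : u j ≤ ∑ k, u k := Finset.single_le_sum (fun k _ => hu k) hj
          nlinarith [hε j]
      _ = (a₀ + ∑ j, u j) * ∑ j, ε j := by rw [← Finset.mul_sum]
  have hXE : ∑ j, x j ≤ (a₀ + ∑ j, u j) * (εrem + ∑ j, ε j) := hX
  obtain ⟨hrepA, hintA⟩ := Phi_rep hA hE hsx hXE
  have hrep : ∀ j : Fin n, Phi (a₀ + u j) (ε j) (x j)
      = (∫ t in Set.Ioi (0:ℝ), psi (a₀ + u j) (ε j) (x j) t)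
      ∧ IntegrableOn (psi (a₀ + u j) (ε j) (x j)) (Set.Ioi (0:ℝ)) :=
    fun j => Phi_rep (by linarith [hu j]) (hε j) (hx j) (hxu j)
  rw [ge_iff_le, hrepA]
  calc (∫ t in Set.Ioi (0:ℝ), psi (a₀ + ∑ j, u j) (εrem + ∑ j, ε j) (∑ j, x j) t)
      ≤ ∫ t in Set.Ioi (0:ℝ), ∑ j, psi (a₀ + u j) (ε j) (x j) t := by
        apply setIntegral_mono_on hintA
          (MeasureTheory.integrable_finset_sum _ fun j _ => (hrep j).2)
          measurableSet_Ioi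
        intro t ht
        rw [Set.mem_Ioi] at ht
        have h1 := psi_merge_finset a₀ ha₀ u ε x hu hε hx hxu ht Finset.univ
        calc psi (a₀ + ∑ j, u j) (εrem + ∑ j, ε j) (∑ j, x j) t
            = psi (a₀ + ∑ j, u j) ((∑ j, ε j) + εrem) (∑ j, x j) t := by
              rw [add_comm εrem]
          _ ≤ psi (a₀ + ∑ j, u j) (∑ j, ε j) (∑ j, x j) t :=
              psi_anti_e hA.le hsε hεrem hsx hXe ht
          _ ≤ _ := h1
    _ = ∑ j, ∫ t in Set.Ioi (0:ℝ), psi (a₀ + u j) (ε j) (x j) t :=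
        integral_finset_sum _ fun j _ => (hrep j).2
    _ = ∑ j, Phi (a₀ + u j) (ε j) (x j) :=
        Finset.sum_congr rfl fun j _ => ((hrep j).1).symm
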